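/- Define Ω_{η,γ}(z) = η·exp(iπ(z-1))·Θ(z) + γ·exp(iπz)·Θ(z-1)·φ with Θ(z) = (φ^z - exp(iπz)φ^(-z))/√5. Then for all η, γ, z ∈ ℂ, Ω_{η,γ}(z) = Ω_{η,γ}(z-2) - Ω_{η,γ}(z-1). -/

import Mathlib

noncomputable def phiC : ℂ := (1 + Real.sqrt 5) / 2

noncomputable def Theta (z : ℂ) : ℂ :=
  (Complex.exp (z * Complex.log phiC) -
      Complex.exp (Real.pi * Complex.I * z) * Complex.exp (-z * Complex.log phiC)) /
    (Real.sqrt 5 : ℂ)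

noncomputable def Omega (η γ : ℂ) (z : ℂ) : ℂ :=
  η * Complex.exp (Real.pi * Complex.I * (z - 1)) * Theta z +
    γ * Complex.exp (Real.pi * Complex.I * z) * Theta (z - 1) * phiC

lemma sqrt5_pos : (0:ℝ) < Real.sqrt 5 := Real.sqrt_pos.mpr (by norm_num)

lemma phiC_ne : phiC ≠ 0 := by
  have h := sqrt5_pos
  simp only [phiC, div_ne_zero_iff]
  constructor
  · exact_mod_cast ne_of_gt (by positivity : (0:ℝ) < 1 + Real.sqrt 5)
  · norm_num

lemma sqrt5_sq : (Real.sqrt 5 : ℂ) ^ 2 = 5 := by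
  rw [← Complex.ofReal_pow, Real.sq_sqrt (by norm_num : (0:ℝ) ≤ 5)]
  norm_num

lemma phiC_sq : phiC ^ 2 = phiC + 1 := by
  have h := sqrt5_sq
  simp only [phiC]
  field_simp
  linear_combination h

lemma phiC_inv : phiC⁻¹ = phiC - 1 := by
  have h0 := phiC_ne
  have h := phiC_sq
  field_simp
  linear_combination -h

theorem Omega_recurrence (η γ z : ℂ) :
    Omega η γ z = Omega η γ (z - 2) - Omega η γ (z - 1) := by
  have hL : Complex.exp (Complex.log phiC) = phiC := Complex.exp_log phiC_ne
  have hpin : Complex.exp (-(Real.pi * Complex.I)) = -1 := by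
    rw [Complex.exp_neg, show Complex.exp (Real.pi * Complex.I) = -1 by
      simpa [mul_comm] using Complex.exp_pi_mul_I]
    norm_num
  set L := Complex.log phiC with hLdef
  set A := Complex.exp (z * L) with hA
  set B := Complex.exp (-z * L) with hB
  set E := Complex.exp (Real.pi * Complex.I * z) with hE
  have e1 : Complex.exp ((z - 1) * L) = A * phiC⁻¹ := by
    rw [show (z-1)*L = z*L + -L by ring, Complex.exp_add, Complex.exp_neg, hL, hA]
  have e2 : Complex.exp ((z - 2) * L) = A * phiC⁻¹ ^ 2 := by
    rw [show (z-2)*L = z*L + -L + -L by ring, Complex.exp_add, Complex.exp_add,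
      Complex.exp_neg, hL, hA]
    ring
  have e3 : Complex.exp ((z - 2 - 1) * L) = A * phiC⁻¹ ^ 3 := by
    rw [show (z-2-1)*L = z*L + -L + -L + -L by ring, Complex.exp_add, Complex.exp_add,
      Complex.exp_add, Complex.exp_neg, hL, hA]
    ring
  have e1' : Complex.exp ((z - 1 - 1) * L) = A * phiC⁻¹ ^ 2 := by
    rw [show z - 1 - 1 = z - 2 by ring, e2]
  have f1 : Complex.exp (-(z - 1) * L) = B * phiC := by
    rw [show -(z-1)*L = -z*L + L by ring, Complex.exp_add, hL, hB]
  have f2 : Complex.exp (-(z - 2) * L) = B * phiC ^ 2 := by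
    rw [show -(z-2)*L = -z*L + L + L by ring, Complex.exp_add, Complex.exp_add, hL, hB]
    ring
  have f3 : Complex.exp (-(z - 2 - 1) * L) = B * phiC ^ 3 := by
    rw [show -(z-2-1)*L = -z*L + L + L + L by ring, Complex.exp_add, Complex.exp_add,
      Complex.exp_add, hL, hB]
    ring
  have f1' : Complex.exp (-(z - 1 - 1) * L) = B * phiC ^ 2 := by
    rw [show z - 1 - 1 = z - 2 by ring, f2]
  have g1 : Complex.exp (Real.pi * Complex.I * (z - 1)) = -E := by
    rw [show Real.pi * Complex.I * (z-1) = Real.pi * Complex.I * z + -(Real.pi * Complex.I) by ring,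
      Complex.exp_add, hpin, hE]
    ring
  have g2 : Complex.exp (Real.pi * Complex.I * (z - 2)) = E := by
    rw [show Real.pi * Complex.I * (z-2) = Real.pi * Complex.I * z + -(Real.pi * Complex.I)
      + -(Real.pi * Complex.I) by ring, Complex.exp_add, Complex.exp_add, hpin, hE]
    ring
  have g3 : Complex.exp (Real.pi * Complex.I * (z - 1 - 1)) = E := by
    rw [show z - 1 - 1 = z - 2 by ring, g2]
  have g4 : Complex.exp (Real.pi * Complex.I * (z - 2 - 1)) = -E := by
    rw [show Real.pi * Complex.I * (z-2-1) = Real.pi * Complex.I * (z-2)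
      + -(Real.pi * Complex.I) by ring, Complex.exp_add, hpin, g2]
    ring
  simp only [Omega, Theta, ← hLdef, ← hA, ← hB, e1, e2, e3, f1, f2, f3, g1, g2, g3, g4, e1', f1', phiC_inv]
  linear_combination ((η*A*E - η*B*E*E + γ*A*E*phiC - γ*A*E*phiC^2 - γ*B*E*E*phiC^2)
    / (Real.sqrt 5 : ℂ)) * phiC_sq
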